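/- Define for k ∈ ℕ, a.e. t ∈ [0,1]: x₁^k(t) = (t − 1/2)/k, x₂^k(t) = 0, v₁^k(t) = v₂^k(t) = k²/(3(t − 1/2)²). Then for each k and a.e. t ∈ [0,1] with t ≠ 1/2: ∇ₓφ(x^k(t),t) + v₁^k(t)∇ₓg₁(x^k(t),t) + v₂^k(t)∇ₓg₂(x^k(t),t) = 0, where φ(x,t) = (t−1/2)x₁, g₁(x,t) = −(t−1/2)x₁³ + x₂, g₂(x,t) = −x₂. Moreover x^k(t) → (0,0), v_j^k(t)·max{−g_j(x^k(t),t),0} → 0, and v_j^k(t) ≥ 0 a.e., so x̄ ≡ (0,0) is a pw-AKKT solution. -/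

import Mathlib

open MeasureTheory Set Filter Topology

/-- For the example with `φ(y,t) = (t-1/2) y₁`, `g₁(y,t) = -(t-1/2) y₁³ + y₂`,
`g₂(y,t) = -y₂`, the sequences `x^k(t) = ((t-1/2)/k, 0)` and
`v₁^k(t) = v₂^k(t) = k²/(3(t-1/2)²)` satisfy exact stationarity of the Lagrangian
at `x^k(t)` for `t ≠ 1/2`, converge pointwise to `x̄ ≡ (0,0)`, satisfy approximate
complementarity, and have nonnegative multipliers; hence `x̄` is pw-AKKT. -/
theorem stmt6
    (x : ℕ → ℝ → ℝ × ℝ) (v₁ v₂ : ℕ → ℝ → ℝ)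
    (hx : ∀ k t, x k t = ((t - 1 / 2) / (k : ℝ), 0))
    (hv₁ : ∀ k t, v₁ k t = (k : ℝ) ^ 2 / (3 * (t - 1 / 2) ^ 2))
    (hv₂ : ∀ k t, v₂ k t = (k : ℝ) ^ 2 / (3 * (t - 1 / 2) ^ 2)) :
    (∀ k : ℕ, 1 ≤ k → ∀ t ∈ Icc (0:ℝ) 1, t ≠ 1 / 2 →
      fderiv ℝ (fun y : ℝ × ℝ => (t - 1 / 2) * y.1) (x k t) +
        v₁ k t • fderiv ℝ (fun y : ℝ × ℝ => -(t - 1 / 2) * y.1 ^ 3 + y.2) (x k t) +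
        v₂ k t • fderiv ℝ (fun y : ℝ × ℝ => -y.2) (x k t) = 0) ∧
    (∀ t : ℝ, Tendsto (fun k => x k t) atTop (𝓝 ((0:ℝ), (0:ℝ)))) ∧
    (∀ t ∈ Icc (0:ℝ) 1, t ≠ 1 / 2 →
      Tendsto (fun k => v₁ k t *
        max (-(-(t - 1 / 2) * (x k t).1 ^ 3 + (x k t).2)) 0) atTop (𝓝 0) ∧
      Tendsto (fun k => v₂ k t * max (-(-(x k t).2)) 0) atTop (𝓝 0)) ∧
    (∀ k t, 0 ≤ v₁ k t ∧ 0 ≤ v₂ k t) := by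
  refine ⟨?_, ?_, ?_, ?_⟩
  · -- stationarity
    intro k hk t ht hne
    set c : ℝ := t - 1 / 2 with hc
    have hc0 : c ≠ 0 := sub_ne_zero.mpr hne
    have hk0 : (k : ℝ) ≠ 0 := Nat.cast_ne_zero.mpr (by omega)
    set p : ℝ × ℝ := x k t with hp
    have hf : HasFDerivAt (fun y : ℝ × ℝ => y.1) (ContinuousLinearMap.fst ℝ ℝ ℝ) p :=
      hasFDerivAt_fst
    have h1 : HasFDerivAt (fun y : ℝ × ℝ => c * y.1) (c • ContinuousLinearMap.fst ℝ ℝ ℝ) p :=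
      hf.const_mul c
    have h2 : HasFDerivAt (fun y : ℝ × ℝ => -c * y.1 ^ 3 + y.2)
        (((-c * (3 * p.1 ^ 2)) • ContinuousLinearMap.fst ℝ ℝ ℝ)
          + ContinuousLinearMap.snd ℝ ℝ ℝ) p := by
      have H := (((hf.mul hf).mul hf).const_mul (-c)).add (hasFDerivAt_snd (p := p))
      refine (H.congr_of_eventuallyEq (Filter.Eventually.of_forall fun y => ?_)).congr_fderiv ?_
      · simp only [Pi.add_apply, Pi.mul_apply]; ring
      · ext <;> simp <;> ring
    have h3 : HasFDerivAt (fun y : ℝ × ℝ => -y.2) (-ContinuousLinearMap.snd ℝ ℝ ℝ) p :=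
      (hasFDerivAt_snd (p := p)).neg
    rw [h1.fderiv, h2.fderiv, h3.fderiv]
    have hp1 : p.1 = c / (k : ℝ) := by rw [hp, hx]
    have hv : v₁ k t = (k : ℝ) ^ 2 / (3 * c ^ 2) := hv₁ k t
    have hv' : v₂ k t = (k : ℝ) ^ 2 / (3 * c ^ 2) := hv₂ k t
    ext
    · simp [hp1, hv, hv']
      field_simp
      ring
    · simp [hv, hv']
  · -- convergence
    intro t
    have h1 : Tendsto (fun k : ℕ => (t - 1 / 2) / (k : ℝ)) atTop (𝓝 0) :=
      tendsto_const_div_atTop_nhds_zero_nat _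
    have := h1.prodMk_nhds (tendsto_const_nhds (x := (0:ℝ)) (f := atTop (α := ℕ)))
    refine Tendsto.congr (fun k => ?_) this
    rw [hx]
  · -- complementarity
    intro t ht hne
    set c : ℝ := t - 1 / 2 with hc
    have hc0 : c ≠ 0 := sub_ne_zero.mpr hne
    constructor
    · have h1 : Tendsto (fun k : ℕ => (c ^ 2 / 3) / (k : ℝ)) atTop (𝓝 0) :=
        tendsto_const_div_atTop_nhds_zero_nat _
      refine h1.congr' ?_
      filter_upwards [eventually_ge_atTop 1] with k hk
      have hk0 : (k : ℝ) ≠ 0 := Nat.cast_ne_zero.mpr (by omega)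
      have hx1 : (x k t).1 = c / (k : ℝ) := by rw [hx]
      have hx2 : (x k t).2 = 0 := by rw [hx]
      have hvv : v₁ k t = (k : ℝ) ^ 2 / (3 * c ^ 2) := hv₁ k t
      have hpos : (0:ℝ) ≤ -(-c * (c / (k:ℝ)) ^ 3 + 0) := by
        have h : -(-c * (c / (k:ℝ)) ^ 3 + 0) = c ^ 4 / (k:ℝ) ^ 3 := by ring
        rw [h]; positivity
      rw [hx1, hx2, hvv, max_eq_left hpos]
      field_simp
      ring
    · have h0 : ∀ k : ℕ, v₂ k t * max (-(-(x k t).2)) 0 = 0 := by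
        intro k
        have hx2 : (x k t).2 = 0 := by rw [hx]
        rw [hx2]
        simp
      refine Tendsto.congr (fun k => (h0 k).symm) tendsto_const_nhds
  · -- nonnegativity
    intro k t
    constructor
    · rw [hv₁]; positivity
    · rw [hv₂]; positivity
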